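/- arXiv:2602.15079 — 6 statements merged into one kernel-verified Lean document; each statement's English description precedes it below -/
import Mathlib

section
/- Let Ω be a finite probability space with weights w, and let c, h, h̃ : Ω → Fin 2 be random variables. Assume: (i) P(c = j) = 1/2 for j = 0,1; (ii) P(h = j) = 1/2 for j = 0,1; (iii) P(h = j ∧ c = j) = A/2 for j = 0,1, where A := P(h = c); (iv) P(h̃ = j ∧ h = k ∧ c = l) · P(h = k) = P(h̃ = j ∧ h = k) · P(h = k ∧ c = l) for all j,k,l. Then Ã − A = (1 − 2A)(1 − A*), where Ã := P(h̃ = c) and A* := P(h̃ = h). In particular the gap between robustness accuracy and accuracy factors into a term depending only on A and a term depending only on A*. -/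
open Classical in
/-- Probability of an event `E` on a finite probability space with weights `w`. -/
noncomputable def prob {Ω : Type*} [Fintype Ω] (w : Ω → ℝ) (E : Ω → Prop) : ℝ :=
  ∑ ω, if E ω then w ω else 0

open Classical in
lemma prob_congr {Ω : Type*} [Fintype Ω] (w : Ω → ℝ) {E F : Ω → Prop}
    (hEF : ∀ ω, E ω ↔ F ω) : prob w E = prob w F := by
  unfold prob
  exact Finset.sum_congr rfl fun ω _ => by rw [if_congr (hEF ω) rfl rfl]

open Classical in
lemma prob_split {Ω : Type*} [Fintype Ω] (w : Ω → ℝ) (E : Ω → Prop) (f : Ω → Fin 2) :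
    prob w E = prob w (fun ω => E ω ∧ f ω = 0) + prob w (fun ω => E ω ∧ f ω = 1) := by
  unfold prob
  rw [← Finset.sum_add_distrib]
  refine Finset.sum_congr rfl fun ω _ => ?_
  by_cases hf : f ω = 0
  · by_cases hE : E ω <;> simp [hf, hE]
  · have hf1 : f ω = 1 := Fin.eq_one_of_ne_zero _ hf
    by_cases hE : E ω <;> simp [hf1, hE]

/-- **Gap formula.** Under the unbiased assumptions of Theorem 1,
`Ã − A = (1 − 2A)(1 − A*)`. -/
theorem robustness_accuracy_gap
    {Ω : Type*} [Fintype Ω] (w : Ω → ℝ)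
    (hw0 : ∀ ω, 0 ≤ w ω) (hw1 : ∑ ω, w ω = 1)
    (c h ht : Ω → Fin 2)
    (hdata : ∀ j : Fin 2, prob w (fun ω => c ω = j) = 1 / 2)
    (hmodel : ∀ j : Fin 2, prob w (fun ω => h ω = j) = 1 / 2)
    (hbal : ∀ j : Fin 2, prob w (fun ω => h ω = j ∧ c ω = j)
      = prob w (fun ω => h ω = c ω) / 2)
    (hcondind : ∀ j k l : Fin 2,
      prob w (fun ω => ht ω = j ∧ h ω = k ∧ c ω = l) * prob w (fun ω => h ω = k)
        = prob w (fun ω => ht ω = j ∧ h ω = k) * prob w (fun ω => h ω = k ∧ c ω = l)) :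
    prob w (fun ω => ht ω = c ω) - prob w (fun ω => h ω = c ω)
      = (1 - 2 * prob w (fun ω => h ω = c ω))
        * (1 - prob w (fun ω => ht ω = h ω)) := by
  set A := prob w (fun ω => h ω = c ω) with hA
  set As := prob w (fun ω => ht ω = h ω) with hAs
  set p : Fin 2 → Fin 2 → Fin 2 → ℝ :=
    fun j k l => prob w (fun ω => ht ω = j ∧ h ω = k ∧ c ω = l) with hp
  set q : Fin 2 → Fin 2 → ℝ := fun j k => prob w (fun ω => ht ω = j ∧ h ω = k) with hq
  set r : Fin 2 → Fin 2 → ℝ := fun k l => prob w (fun ω => h ω = k ∧ c ω = l) with hr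
  -- p in terms of q and r
  have hpqr : ∀ j k l, p j k l = 2 * q j k * r k l := by
    intro j k l
    have := hcondind j k l
    rw [hmodel k] at this
    rw [hp, hq, hr]
    linarith [this]
  -- r values
  have hr00 : r 0 0 = A / 2 := hbal 0
  have hr11 : r 1 1 = A / 2 := hbal 1
  have hr01 : r 0 1 = (1 - A) / 2 := by
    have hs := prob_split w (fun ω => h ω = 0) c
    rw [hmodel 0] at hs
    have : prob w (fun ω => h ω = 0 ∧ c ω = 0) = A / 2 := hbal 0
    rw [hr]; simp only at hs ⊢; linarith [this, hs]
  have hr10 : r 1 0 = (1 - A) / 2 := by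
    have hs := prob_split w (fun ω => h ω = 1) c
    rw [hmodel 1] at hs
    have : prob w (fun ω => h ω = 1 ∧ c ω = 1) = A / 2 := hbal 1
    rw [hr]; simp only at hs ⊢; linarith [this, hs]
  -- q sums
  have hq0 : q 0 0 + q 1 0 = 1 / 2 := by
    have hs := prob_split w (fun ω => h ω = 0) ht
    rw [hmodel 0] at hs
    have e0 : prob w (fun ω => h ω = 0 ∧ ht ω = 0) = q 0 0 :=
      prob_congr w (fun ω => by tauto)
    have e1 : prob w (fun ω => h ω = 0 ∧ ht ω = 1) = q 1 0 :=
      prob_congr w (fun ω => by tauto)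
    rw [e0, e1] at hs; linarith
  have hq1 : q 0 1 + q 1 1 = 1 / 2 := by
    have hs := prob_split w (fun ω => h ω = 1) ht
    rw [hmodel 1] at hs
    have e0 : prob w (fun ω => h ω = 1 ∧ ht ω = 0) = q 0 1 :=
      prob_congr w (fun ω => by tauto)
    have e1 : prob w (fun ω => h ω = 1 ∧ ht ω = 1) = q 1 1 :=
      prob_congr w (fun ω => by tauto)
    rw [e0, e1] at hs; linarith
  -- A* in terms of q
  have hAsq : As = q 0 0 + q 1 1 := by
    have hs := prob_split w (fun ω => ht ω = h ω) h
    have e0 : prob w (fun ω => ht ω = h ω ∧ h ω = 0) = q 0 0 :=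
      prob_congr w (fun ω => by constructor <;> rintro ⟨h1, h2⟩ <;> simp_all)
    have e1 : prob w (fun ω => ht ω = h ω ∧ h ω = 1) = q 1 1 :=
      prob_congr w (fun ω => by constructor <;> rintro ⟨h1, h2⟩ <;> simp_all)
    rw [e0, e1] at hs; linarith [hs]
  -- Ã in terms of p
  have hAt : prob w (fun ω => ht ω = c ω) = p 0 0 0 + p 1 0 1 + p 0 1 0 + p 1 1 1 := by
    have hs := prob_split w (fun ω => ht ω = c ω) h
    have hs0 := prob_split w (fun ω => ht ω = c ω ∧ h ω = 0) c
    have hs1 := prob_split w (fun ω => ht ω = c ω ∧ h ω = 1) c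
    have e000 : prob w (fun ω => (ht ω = c ω ∧ h ω = 0) ∧ c ω = 0) = p 0 0 0 :=
      prob_congr w (fun ω => ⟨fun ⟨⟨h1,h2⟩,h3⟩ => ⟨h1.trans h3, h2, h3⟩, fun ⟨h1,h2,h3⟩ => ⟨⟨h1.trans h3.symm, h2⟩, h3⟩⟩)
    have e101 : prob w (fun ω => (ht ω = c ω ∧ h ω = 0) ∧ c ω = 1) = p 1 0 1 :=
      prob_congr w (fun ω => ⟨fun ⟨⟨h1,h2⟩,h3⟩ => ⟨h1.trans h3, h2, h3⟩, fun ⟨h1,h2,h3⟩ => ⟨⟨h1.trans h3.symm, h2⟩, h3⟩⟩)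
    have e010 : prob w (fun ω => (ht ω = c ω ∧ h ω = 1) ∧ c ω = 0) = p 0 1 0 :=
      prob_congr w (fun ω => ⟨fun ⟨⟨h1,h2⟩,h3⟩ => ⟨h1.trans h3, h2, h3⟩, fun ⟨h1,h2,h3⟩ => ⟨⟨h1.trans h3.symm, h2⟩, h3⟩⟩)
    have e111 : prob w (fun ω => (ht ω = c ω ∧ h ω = 1) ∧ c ω = 1) = p 1 1 1 :=
      prob_congr w (fun ω => ⟨fun ⟨⟨h1,h2⟩,h3⟩ => ⟨h1.trans h3, h2, h3⟩, fun ⟨h1,h2,h3⟩ => ⟨⟨h1.trans h3.symm, h2⟩, h3⟩⟩)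
    rw [e000, e101] at hs0
    rw [e010, e111] at hs1
    rw [hs, hs0, hs1]; ring
  -- put together
  rw [hAt, hpqr 0 0 0, hpqr 1 0 1, hpqr 0 1 0, hpqr 1 1 1, hr00, hr11, hr01, hr10]
  have h1 : q 1 1 = As - q 0 0 := by linarith [hAsq]
  rw [h1]
  have h2 : q 1 0 = 1 / 2 - q 0 0 := by linarith [hq0]
  have h3 : q 0 1 = 1 / 2 - (As - q 0 0) := by linarith [hq1, hAsq]
  rw [h2, h3]
  ring
end

section
/- Let Ω be a finite probability space with weights w, and let c, h, h̃ : Ω → Fin 2 be random variables. Assume: (i) P(c = j) = 1/2 for j = 0,1; (ii) P(h = j) = 1/2 for j = 0,1; (iii) P(h = j ∧ c = j) = A/2 for j = 0,1, where A := P(h = c); (iv) P(h̃ = j ∧ h = k ∧ c = l) · P(h = k) = P(h̃ = j ∧ h = k) · P(h = k ∧ c = l) for all j,k,l. Then the robustness accuracy equals the accuracy, Ã = A, if and only if A* = 1 or A = 1/2, where Ã := P(h̃ = c) and A* := P(h̃ = h). In particular, if the model is perfectly prediction-change robust (A* = 1) then no accuracy is lost under the perturbation. -/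
open Classical in
lemma prob_decomp {Ω : Type*} [Fintype Ω] (w : Ω → ℝ) (ht h c : Ω → Fin 2)
    (G : Fin 2 → Fin 2 → Fin 2 → Prop) :
    prob w (fun ω => G (ht ω) (h ω) (c ω))
      = ∑ j : Fin 2, ∑ k : Fin 2, ∑ l : Fin 2,
          if G j k l then prob w (fun ω => ht ω = j ∧ h ω = k ∧ c ω = l) else 0 := by
  have hpush : ∀ (j k l : Fin 2),
      (if G j k l then prob w (fun ω => ht ω = j ∧ h ω = k ∧ c ω = l) else 0)
        = prob w (fun ω => G j k l ∧ ht ω = j ∧ h ω = k ∧ c ω = l) := by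
    intro j k l
    by_cases hG : G j k l
    · rw [if_pos hG]
      unfold prob
      refine Finset.sum_congr rfl fun ω _ => ?_
      have hiff : (ht ω = j ∧ h ω = k ∧ c ω = l) ↔ (G j k l ∧ ht ω = j ∧ h ω = k ∧ c ω = l) := by
        tauto
      congr 1
      exact propext hiff
    · rw [if_neg hG]
      unfold prob
      symm
      refine Finset.sum_eq_zero fun ω _ => ?_
      rw [if_neg (by tauto)]
  simp only [hpush, Fin.sum_univ_two]
  unfold prob
  rw [← Finset.sum_add_distrib, ← Finset.sum_add_distrib, ← Finset.sum_add_distrib,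
    ← Finset.sum_add_distrib, ← Finset.sum_add_distrib, ← Finset.sum_add_distrib,
    ← Finset.sum_add_distrib]
  refine Finset.sum_congr rfl fun ω _ => ?_
  have h2 : ∀ x : Fin 2, x = 0 ∨ x = 1 := by decide
  rcases h2 (ht ω) with h1 | h1 <;> rcases h2 (h ω) with hh1 | hh1 <;>
    rcases h2 (c ω) with hc1 | hc1 <;> simp [h1, hh1, hc1]

/-- Under the unbiased assumptions of Theorem 1, `Ã = A` iff `A* = 1` or `A = 1/2`. -/
theorem robustness_accuracy_no_loss_iff
    {Ω : Type*} [Fintype Ω] (w : Ω → ℝ)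
    (hw0 : ∀ ω, 0 ≤ w ω) (hw1 : ∑ ω, w ω = 1)
    (c h ht : Ω → Fin 2)
    (hdata : ∀ j : Fin 2, prob w (fun ω => c ω = j) = 1 / 2)
    (hmodel : ∀ j : Fin 2, prob w (fun ω => h ω = j) = 1 / 2)
    (hbal : ∀ j : Fin 2, prob w (fun ω => h ω = j ∧ c ω = j)
      = prob w (fun ω => h ω = c ω) / 2)
    (hcondind : ∀ j k l : Fin 2,
      prob w (fun ω => ht ω = j ∧ h ω = k ∧ c ω = l) * prob w (fun ω => h ω = k)
        = prob w (fun ω => ht ω = j ∧ h ω = k) * prob w (fun ω => h ω = k ∧ c ω = l)) :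
    prob w (fun ω => ht ω = c ω) = prob w (fun ω => h ω = c ω)
      ↔ prob w (fun ω => ht ω = h ω) = 1 ∨ prob w (fun ω => h ω = c ω) = 1 / 2 := by
  have DA : prob w (fun ω => h ω = c ω) = prob w (fun ω => ht ω = 0 ∧ h ω = 0 ∧ c ω = 0) + prob w (fun ω => ht ω = 1 ∧ h ω = 0 ∧ c ω = 0) + prob w (fun ω => ht ω = 0 ∧ h ω = 1 ∧ c ω = 1) + prob w (fun ω => ht ω = 1 ∧ h ω = 1 ∧ c ω = 1) := by
    have hd := prob_decomp w ht h c (fun _ k l => k = l)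
    simp only [Fin.sum_univ_two] at hd
    norm_num at hd
    linarith [hd]
  have DAt : prob w (fun ω => ht ω = c ω) = prob w (fun ω => ht ω = 0 ∧ h ω = 0 ∧ c ω = 0) + prob w (fun ω => ht ω = 0 ∧ h ω = 1 ∧ c ω = 0) + prob w (fun ω => ht ω = 1 ∧ h ω = 0 ∧ c ω = 1) + prob w (fun ω => ht ω = 1 ∧ h ω = 1 ∧ c ω = 1) := by
    have hd := prob_decomp w ht h c (fun j _ l => j = l)
    simp only [Fin.sum_univ_two] at hd
    norm_num at hd
    linarith [hd]
  have DAs : prob w (fun ω => ht ω = h ω) = prob w (fun ω => ht ω = 0 ∧ h ω = 0 ∧ c ω = 0) + prob w (fun ω => ht ω = 0 ∧ h ω = 0 ∧ c ω = 1) + prob w (fun ω => ht ω = 1 ∧ h ω = 1 ∧ c ω = 0) + prob w (fun ω => ht ω = 1 ∧ h ω = 1 ∧ c ω = 1) := by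
    have hd := prob_decomp w ht h c (fun j k _ => j = k)
    simp only [Fin.sum_univ_two] at hd
    norm_num at hd
    linarith [hd]
  have Dhc00 : prob w (fun ω => h ω = 0 ∧ c ω = 0) = prob w (fun ω => ht ω = 0 ∧ h ω = 0 ∧ c ω = 0) + prob w (fun ω => ht ω = 1 ∧ h ω = 0 ∧ c ω = 0) := by
    have hd := prob_decomp w ht h c (fun _ k l => k = 0 ∧ l = 0)
    simp only [Fin.sum_univ_two] at hd
    norm_num at hd
    linarith [hd]
  have Dhc01 : prob w (fun ω => h ω = 0 ∧ c ω = 1) = prob w (fun ω => ht ω = 0 ∧ h ω = 0 ∧ c ω = 1) + prob w (fun ω => ht ω = 1 ∧ h ω = 0 ∧ c ω = 1) := by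
    have hd := prob_decomp w ht h c (fun _ k l => k = 0 ∧ l = 1)
    simp only [Fin.sum_univ_two] at hd
    norm_num at hd
    linarith [hd]
  have Dhc10 : prob w (fun ω => h ω = 1 ∧ c ω = 0) = prob w (fun ω => ht ω = 0 ∧ h ω = 1 ∧ c ω = 0) + prob w (fun ω => ht ω = 1 ∧ h ω = 1 ∧ c ω = 0) := by
    have hd := prob_decomp w ht h c (fun _ k l => k = 1 ∧ l = 0)
    simp only [Fin.sum_univ_two] at hd
    norm_num at hd
    linarith [hd]
  have Dhc11 : prob w (fun ω => h ω = 1 ∧ c ω = 1) = prob w (fun ω => ht ω = 0 ∧ h ω = 1 ∧ c ω = 1) + prob w (fun ω => ht ω = 1 ∧ h ω = 1 ∧ c ω = 1) := by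
    have hd := prob_decomp w ht h c (fun _ k l => k = 1 ∧ l = 1)
    simp only [Fin.sum_univ_two] at hd
    norm_num at hd
    linarith [hd]
  have Dth00 : prob w (fun ω => ht ω = 0 ∧ h ω = 0) = prob w (fun ω => ht ω = 0 ∧ h ω = 0 ∧ c ω = 0) + prob w (fun ω => ht ω = 0 ∧ h ω = 0 ∧ c ω = 1) := by
    have hd := prob_decomp w ht h c (fun j k _ => j = 0 ∧ k = 0)
    simp only [Fin.sum_univ_two] at hd
    norm_num at hd
    linarith [hd]
  have Dth01 : prob w (fun ω => ht ω = 0 ∧ h ω = 1) = prob w (fun ω => ht ω = 0 ∧ h ω = 1 ∧ c ω = 0) + prob w (fun ω => ht ω = 0 ∧ h ω = 1 ∧ c ω = 1) := by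
    have hd := prob_decomp w ht h c (fun j k _ => j = 0 ∧ k = 1)
    simp only [Fin.sum_univ_two] at hd
    norm_num at hd
    linarith [hd]
  have Dth10 : prob w (fun ω => ht ω = 1 ∧ h ω = 0) = prob w (fun ω => ht ω = 1 ∧ h ω = 0 ∧ c ω = 0) + prob w (fun ω => ht ω = 1 ∧ h ω = 0 ∧ c ω = 1) := by
    have hd := prob_decomp w ht h c (fun j k _ => j = 1 ∧ k = 0)
    simp only [Fin.sum_univ_two] at hd
    norm_num at hd
    linarith [hd]
  have Dth11 : prob w (fun ω => ht ω = 1 ∧ h ω = 1) = prob w (fun ω => ht ω = 1 ∧ h ω = 1 ∧ c ω = 0) + prob w (fun ω => ht ω = 1 ∧ h ω = 1 ∧ c ω = 1) := by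
    have hd := prob_decomp w ht h c (fun j k _ => j = 1 ∧ k = 1)
    simp only [Fin.sum_univ_two] at hd
    norm_num at hd
    linarith [hd]
  have Dh0 : prob w (fun ω => h ω = 0) = prob w (fun ω => ht ω = 0 ∧ h ω = 0 ∧ c ω = 0) + prob w (fun ω => ht ω = 0 ∧ h ω = 0 ∧ c ω = 1) + prob w (fun ω => ht ω = 1 ∧ h ω = 0 ∧ c ω = 0) + prob w (fun ω => ht ω = 1 ∧ h ω = 0 ∧ c ω = 1) := by
    have hd := prob_decomp w ht h c (fun _ k _ => k = 0)
    simp only [Fin.sum_univ_two] at hd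
    norm_num at hd
    linarith [hd]
  have Dc0 : prob w (fun ω => c ω = 0) = prob w (fun ω => ht ω = 0 ∧ h ω = 0 ∧ c ω = 0) + prob w (fun ω => ht ω = 0 ∧ h ω = 1 ∧ c ω = 0) + prob w (fun ω => ht ω = 1 ∧ h ω = 0 ∧ c ω = 0) + prob w (fun ω => ht ω = 1 ∧ h ω = 1 ∧ c ω = 0) := by
    have hd := prob_decomp w ht h c (fun _ _ l => l = 0)
    simp only [Fin.sum_univ_two] at hd
    norm_num at hd
    linarith [hd]
  have htrue : prob w (fun _ => True) = 1 := by simp [prob, hw1]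
  have Dtot : (1:ℝ) = prob w (fun ω => ht ω = 0 ∧ h ω = 0 ∧ c ω = 0) + prob w (fun ω => ht ω = 0 ∧ h ω = 0 ∧ c ω = 1) + prob w (fun ω => ht ω = 0 ∧ h ω = 1 ∧ c ω = 0) + prob w (fun ω => ht ω = 0 ∧ h ω = 1 ∧ c ω = 1) + prob w (fun ω => ht ω = 1 ∧ h ω = 0 ∧ c ω = 0) + prob w (fun ω => ht ω = 1 ∧ h ω = 0 ∧ c ω = 1) + prob w (fun ω => ht ω = 1 ∧ h ω = 1 ∧ c ω = 0) + prob w (fun ω => ht ω = 1 ∧ h ω = 1 ∧ c ω = 1) := by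
    have hd := prob_decomp w ht h c (fun _ _ _ => True)
    simp only [Fin.sum_univ_two] at hd
    norm_num at hd
    linarith [hd, htrue]
  have e000 := hcondind 0 0 0
  rw [hmodel 0, Dth00, Dhc00] at e000
  have e010 := hcondind 0 1 0
  rw [hmodel 1, Dth01, Dhc10] at e010
  have e101 := hcondind 1 0 1
  rw [hmodel 0, Dth10, Dhc01] at e101
  have e111 := hcondind 1 1 1
  rw [hmodel 1, Dth11, Dhc11] at e111
  have hb0 := hbal 0
  rw [Dhc00, DA] at hb0
  have hb1 := hbal 1
  rw [Dhc11, DA] at hb1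
  have hm0 := hmodel 0
  rw [Dh0] at hm0
  have hd0 := hdata 0
  rw [Dc0] at hd0
  rw [DA, DAt, DAs]
  set a := prob w (fun ω => ht ω = 0 ∧ h ω = 0 ∧ c ω = 0) with ha
  set b := prob w (fun ω => ht ω = 0 ∧ h ω = 0 ∧ c ω = 1) with hb
  set c2 := prob w (fun ω => ht ω = 0 ∧ h ω = 1 ∧ c ω = 0) with hc2
  set d := prob w (fun ω => ht ω = 0 ∧ h ω = 1 ∧ c ω = 1) with hd
  set e := prob w (fun ω => ht ω = 1 ∧ h ω = 0 ∧ c ω = 0) with he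
  set f := prob w (fun ω => ht ω = 1 ∧ h ω = 0 ∧ c ω = 1) with hf
  set g := prob w (fun ω => ht ω = 1 ∧ h ω = 1 ∧ c ω = 0) with hg
  set i := prob w (fun ω => ht ω = 1 ∧ h ω = 1 ∧ c ω = 1) with hi
  have key : (a + c2 + f + i) - (a + e + d + i)
      = (2 * (a + e + d + i) - 1) * ((a + b + g + i) - 1) := by
    linear_combination (2:ℝ) * e000 + 2 * e010 + 2 * e101 + 2 * e111
      + (2*(a+b) - 2*(e+f) - 2*(c2+d)) * hb0 + 2*(g+i) * hb1
      + 2*(e+f) * hm0 + 2*(c2+d) * hd0 + ((a+e+d+i) - 1) * Dtot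
  constructor
  · intro hEq
    have hz : (2 * (a + e + d + i) - 1) * ((a + b + g + i) - 1) = 0 := by linarith
    rcases mul_eq_zero.mp hz with hz | hz
    · right; linarith
    · left; linarith
  · rintro (hz | hz)
    · rw [hz] at key
      norm_num at key
      linarith
    · rw [hz] at key
      norm_num at key
      linarith
end

section
/- Let Ω be a finite probability space with weights w, let K ≥ 2, let h, h̃ : Ω → Fin K be random variables, let a ∈ Fin K, and let 0 < α < 1. Assume the biased model marginals P(h = a) = α and P(h = i) = (1 − α)/(K − 1) for every i ≠ a. Then Σ_{j ∈ Fin K} P(h̃ = j ∧ h = j)/P(h = j) = ((K − 1)/(1 − α)) · ( A* + ((1 − α)/(α(K − 1)) − 1) · P(h̃ = a ∧ h = a) ), where A* := P(h̃ = h). -/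
/-- **Appendix B identity (biased classifier).** If the model marginals are biased
towards a single class `a`, with `P(h = a) = α` and `P(h = i) = (1 − α)/(K − 1)`
for `i ≠ a`, then the sum of the diagonal conditional probabilities equals
`((K − 1)/(1 − α)) · (A* + ((1 − α)/(α(K − 1)) − 1) · P(h̃ = a ∧ h = a))`. -/
theorem biased_classifier_diagonal_sum
    {Ω : Type*} [Fintype Ω] (w : Ω → ℝ)
    (hw0 : ∀ ω, 0 ≤ w ω) (hw1 : ∑ ω, w ω = 1)
    (K : ℕ) (hK : 2 ≤ K)
    (h ht : Ω → Fin K) (a : Fin K) (α : ℝ) (hα0 : 0 < α) (hα1 : α < 1)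
    (hbias : prob w (fun ω => h ω = a) = α)
    (hunbias : ∀ i : Fin K, i ≠ a →
      prob w (fun ω => h ω = i) = (1 - α) / ((K : ℝ) - 1)) :
    ∑ j : Fin K,
        prob w (fun ω => ht ω = j ∧ h ω = j) / prob w (fun ω => h ω = j)
      = (((K : ℝ) - 1) / (1 - α))
          * (prob w (fun ω => ht ω = h ω)
            + ((1 - α) / (α * ((K : ℝ) - 1)) - 1)
              * prob w (fun ω => ht ω = a ∧ h ω = a)) := by
  classical
  have hK1 : (0:ℝ) < (K : ℝ) - 1 := by
    have : (2:ℝ) ≤ (K:ℝ) := by exact_mod_cast hK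
    linarith
  have hα1' : (0:ℝ) < 1 - α := by linarith
  have hA : prob w (fun ω => ht ω = h ω)
      = ∑ j : Fin K, prob w (fun ω => ht ω = j ∧ h ω = j) := by
    unfold prob
    rw [Finset.sum_comm]
    refine Finset.sum_congr rfl fun ω _ => ?_
    by_cases hc : ht ω = h ω
    · rw [if_pos hc]
      have : ∀ j : Fin K, (ht ω = j ∧ h ω = j) ↔ (j = h ω) := by
        intro j; constructor
        · rintro ⟨_, hj⟩; exact hj.symm
        · rintro rfl; exact ⟨hc, rfl⟩
      simp only [this]
      simp
    · rw [if_neg hc]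
      rw [Finset.sum_eq_zero]
      intro j _
      rw [if_neg]
      rintro ⟨h1, h2⟩
      exact hc (h1.trans h2.symm)
  rw [← Finset.add_sum_erase _ _ (Finset.mem_univ a)]
  have hrest : ∑ j ∈ Finset.univ.erase a,
      prob w (fun ω => ht ω = j ∧ h ω = j) / prob w (fun ω => h ω = j)
      = (((K:ℝ)-1)/(1-α)) * ∑ j ∈ Finset.univ.erase a,
          prob w (fun ω => ht ω = j ∧ h ω = j) := by
    rw [Finset.mul_sum]
    refine Finset.sum_congr rfl fun j hj => ?_
    rw [hunbias j (Finset.ne_of_mem_erase hj)]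
    rw [div_div_eq_mul_div]
    ring
  have hsplit : ∑ j ∈ Finset.univ.erase a, prob w (fun ω => ht ω = j ∧ h ω = j)
      = prob w (fun ω => ht ω = h ω) - prob w (fun ω => ht ω = a ∧ h ω = a) := by
    rw [hA, ← Finset.add_sum_erase _ _ (Finset.mem_univ a)]
    ring
  rw [hrest, hsplit, hbias]
  field_simp
  ring
end

section
/- Let Σ⁺ and Σ⁻ be n×n density matrices, let Π₁ be an n×n effect, and let {E_l}_{l ∈ L} be a finite family of n×n complex matrices with Σ_l E_l E_l† = I. Define Σ̃^± := Σ_l E_l† Σ^± E_l, A_s := (1/2)·Re Tr(Π₁Σ⁺) + (1/2)·Re Tr((I − Π₁)Σ⁻), Ã_s := (1/2)·Re Tr(Π₁Σ̃⁺) + (1/2)·Re Tr((I − Π₁)Σ̃⁻), Σ_A := (1/2)(Σ̃⁺ + Σ⁻) and Σ_B := (1/2)(Σ⁺ + Σ̃⁻). Then |Ã_s − A_s| ≤ τ(Σ_A, Σ_B), where τ(Σ_A, Σ_B) := (1/2)·Σ_i |λ_i| and λ_1, …, λ_n are the eigenvalues (with multiplicity) of the Hermitian matrix Σ_A − Σ_B.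 -/
open Matrix
open scoped ComplexOrder

private lemma psd_diag_nonneg {m : ℕ} {M : Matrix (Fin m) (Fin m) ℂ}
    (hM : M.PosSemidef) (i : Fin m) : 0 ≤ M i i := by
  have := hM.dotProduct_mulVec_nonneg (Pi.single i 1)
  simpa [dotProduct, mulVec, Pi.single_apply] using this

private lemma trace_mul_diag {m : ℕ} (M : Matrix (Fin m) (Fin m) ℂ) (d : Fin m → ℂ) :
    (M * diagonal d).trace = ∑ i, M i i * d i := by
  simp [Matrix.trace, Matrix.diag, Matrix.mul_diagonal]

private lemma sum_mul_abs_bound {m : ℕ} (lam c : Fin m → ℝ)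
    (hsum : ∑ i, lam i = 0) (hc0 : ∀ i, 0 ≤ c i) (hc1 : ∀ i, c i ≤ 1) :
    |∑ i, lam i * c i| ≤ (1 / 2) * ∑ i, |lam i| := by
  rw [abs_le]
  have e1 : ∑ i, (lam i + |lam i|) / 2 = (1/2) * ∑ i, |lam i| := by
    rw [← Finset.sum_div, Finset.sum_add_distrib, hsum]; ring
  have e2 : ∑ i, (lam i - |lam i|) / 2 = -((1/2) * ∑ i, |lam i|) := by
    rw [← Finset.sum_div, Finset.sum_sub_distrib, hsum]; ring
  constructor
  · rw [← e2]
    refine Finset.sum_le_sum fun i _ => ?_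
    rcases abs_cases (lam i) with ⟨h1, h2⟩ | ⟨h1, h2⟩ <;> nlinarith [hc0 i, hc1 i]
  · rw [← e1]
    refine Finset.sum_le_sum fun i _ => ?_
    rcases abs_cases (lam i) with ⟨h1, h2⟩ | ⟨h1, h2⟩ <;> nlinarith [hc0 i, hc1 i]

/-- **Lemma 1, inequality part.** The gap between the robustness accuracy and the
accuracy of the stochastic binary classifier under a unital Kraus perturbation of
the measurement is bounded by the trace distance between the mixtures
`Σ_A = (Σ̃⁺ + Σ⁻)/2` and `Σ_B = (Σ⁺ + Σ̃⁻)/2`. -/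
theorem robustness_accuracy_trace_distance_bound
    {n : ℕ} {L : Type*} [Fintype L]
    (Sp Sm P1 : Matrix (Fin n) (Fin n) ℂ)
    (hSp : Sp.PosSemidef) (hSptr : Sp.trace = 1)
    (hSm : Sm.PosSemidef) (hSmtr : Sm.trace = 1)
    (hP1pos : P1.PosSemidef) (hP1eff : (1 - P1).PosSemidef)
    (E : L → Matrix (Fin n) (Fin n) ℂ)
    (hE : ∑ l, E l * (E l)ᴴ = 1)
    (Spt Smt : Matrix (Fin n) (Fin n) ℂ)
    (hSpt : Spt = ∑ l, (E l)ᴴ * Sp * E l)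
    (hSmt : Smt = ∑ l, (E l)ᴴ * Sm * E l)
    (As Ats : ℝ)
    (hAs : As = (1 / 2) * ((P1 * Sp).trace).re
        + (1 / 2) * (((1 - P1) * Sm).trace).re)
    (hAts : Ats = (1 / 2) * ((P1 * Spt).trace).re
        + (1 / 2) * (((1 - P1) * Smt).trace).re)
    (SA SB : Matrix (Fin n) (Fin n) ℂ)
    (hSA : SA = (1 / 2 : ℂ) • (Spt + Sm))
    (hSB : SB = (1 / 2 : ℂ) • (Sp + Smt))
    (hD : (SA - SB).IsHermitian) :
    |Ats - As| ≤ (1 / 2) * ∑ i, |hD.eigenvalues i| := by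
  classical
  -- traces of the perturbed states equal 1
  have htr : ∀ (S : Matrix (Fin n) (Fin n) ℂ), S.trace = 1 →
      (∑ l, (E l)ᴴ * S * E l).trace = 1 := by
    intro S hS
    rw [trace_sum]
    have : ∀ l : L, ((E l)ᴴ * S * E l).trace = (E l * (E l)ᴴ * S).trace := fun l =>
      trace_mul_cycle _ _ _
    rw [Finset.sum_congr rfl (fun l _ => this l), ← trace_sum, ← Finset.sum_mul, hE, one_mul, hS]
  have htrSpt : Spt.trace = 1 := hSpt ▸ htr Sp hSptr
  have htrSmt : Smt.trace = 1 := hSmt ▸ htr Sm hSmtr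
  -- the gap equals the real part of Tr(P1 * (SA - SB))
  have hkey : Ats - As = ((P1 * (SA - SB)).trace).re := by
    have hsub : P1 * (SA - SB)
        = (1 / 2 : ℂ) • (P1 * Spt + P1 * Sm - P1 * Sp - P1 * Smt) := by
      rw [hSA, hSB]
      simp only [Matrix.mul_sub, Matrix.mul_smul, Matrix.mul_add, smul_sub, smul_add]
      abel
    have hAeq : ((1 - P1) * Sm).trace = 1 - (P1 * Sm).trace := by
      rw [Matrix.sub_mul, Matrix.one_mul, trace_sub, hSmtr]
    have hAteq : ((1 - P1) * Smt).trace = 1 - (P1 * Smt).trace := by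
      rw [Matrix.sub_mul, Matrix.one_mul, trace_sub, htrSmt]
    rw [hAs, hAts, hsub, trace_smul, hAeq, hAteq, trace_sub, trace_sub, trace_add]
    simp [Complex.sub_re, Complex.add_re, Complex.one_re, Complex.smul_re]
    ring
  -- spectral decomposition of D = SA - SB
  set V : Matrix (Fin n) (Fin n) ℂ := (hD.eigenvectorUnitary : Matrix (Fin n) (Fin n) ℂ) with hV
  have hVmem : V ∈ Matrix.unitaryGroup (Fin n) ℂ := hD.eigenvectorUnitary.2
  have hVV : star V * V = 1 := (Matrix.mem_unitaryGroup_iff').mp hVmem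
  set f : Fin n → ℂ := RCLike.ofReal ∘ hD.eigenvalues with hf
  have hspec : SA - SB = V * diagonal f * star V := hD.spectral_theorem
  set M : Matrix (Fin n) (Fin n) ℂ := star V * P1 * V with hM
  have hMpsd : M.PosSemidef := by
    have := hP1pos.conjTranspose_mul_mul_same V
    simpa [hM, Matrix.star_eq_conjTranspose] using this
  have h1Mpsd : (1 - M).PosSemidef := by
    have := hP1eff.conjTranspose_mul_mul_same V
    have e : Vᴴ * (1 - P1) * V = 1 - M := by
      have hVV' : Vᴴ * V = 1 := hVV
      rw [Matrix.mul_sub, Matrix.sub_mul, Matrix.mul_one, hM, hVV',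
        Matrix.star_eq_conjTranspose]
    rwa [e] at this
  -- trace identity
  have htrace : (P1 * (SA - SB)).trace = ∑ i, M i i * f i := by
    have e1 : P1 * (SA - SB) = (P1 * V * diagonal f) * star V := by
      rw [hspec]; noncomm_ring
    rw [e1, trace_mul_comm]
    have e2 : star V * (P1 * V * diagonal f) = M * diagonal f := by
      rw [hM]; noncomm_ring
    rw [e2, trace_mul_diag]
  -- diagonal entries of M
  have hc0 : ∀ i, 0 ≤ (M i i).re := fun i => (Complex.le_def.mp (psd_diag_nonneg hMpsd i)).1
  have hcim : ∀ i, (M i i).im = 0 := fun i =>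
    ((Complex.le_def.mp (psd_diag_nonneg hMpsd i)).2).symm
  have hc1 : ∀ i, (M i i).re ≤ 1 := by
    intro i
    have h := (Complex.le_def.mp (psd_diag_nonneg h1Mpsd i)).1
    simp only [Matrix.sub_apply, Matrix.one_apply_eq, Complex.sub_re, Complex.one_re,
      Complex.zero_re] at h
    linarith
  -- sum of eigenvalues is zero
  have htrD : (SA - SB).trace = 0 := by
    rw [trace_sub, hSA, hSB, trace_smul, trace_smul, trace_add, trace_add,
      htrSpt, htrSmt, hSmtr, hSptr]
    ring
  have hsumlam : ∑ i, hD.eigenvalues i = 0 := by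
    have : (SA - SB).trace = ∑ i, f i := by
      rw [hspec, trace_mul_comm, ← mul_assoc, hVV, one_mul, trace_diagonal]
    rw [htrD] at this
    have := congrArg Complex.re this.symm
    simpa [hf, Complex.re_sum] using this
  -- put it together
  have hre : ((P1 * (SA - SB)).trace).re = ∑ i, hD.eigenvalues i * (M i i).re := by
    rw [htrace, Complex.re_sum]
    refine Finset.sum_congr rfl fun i _ => ?_
    simp [hf, Complex.mul_re, hcim i, mul_comm]
  rw [hkey, hre]
  exact sum_mul_abs_bound _ _ hsumlam hc0 hc1
end

section
/- Work with 2×2 complex matrices; let X, Y, Z be the standard Pauli matrices and let Π₁ = |0⟩⟨0| (the diagonal matrix diag(1,0)). Let Σ⁺ and Σ⁻ be 2×2 density matrices and let p₀, p₁, p₂, p₃ ≥ 0 with p₀ + p₁ + p₂ + p₃ = 1. Define the Pauli-channel outputs Σ̃^± := p₀Σ^± + p₁XΣ^±X + p₂YΣ^±Y + p₃ZΣ^±Z, the accuracy A_s := (1/2)·Re Tr(Π₁Σ⁺) + (1/2)·Re Tr((I − Π₁)Σ⁻), and the robustness accuracy Ã_s := (1/2)·Re Tr(Π₁Σ̃⁺)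 + (1/2)·Re Tr((I − Π₁)Σ̃⁻). Then Ã_s − 1/2 = (1 − 2(p₁ + p₂)) · (A_s − 1/2). In particular Ã_s is a decreasing affine function of A_s (a trade-off) exactly when p₁ + p₂ > 1/2, and for a pure phase-flip channel (p₁ = p₂ = 0) there is never a trade-off. -/
open Matrix
open scoped ComplexOrder

set_option maxHeartbeats 1600000 in
/-- **Pauli noise (Example 5).** For the single-qubit Pauli channel
`σ ↦ p₀σ + p₁XσX + p₂YσY + p₃ZσZ` and the measurement `Π₁ = |0⟩⟨0|`, the
robustness accuracy satisfies `Ã_s − 1/2 = (1 − 2(p₁ + p₂))·(A_s − 1/2)`. -/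
theorem pauli_channel_affine_relation
    (Sp Sm : Matrix (Fin 2) (Fin 2) ℂ)
    (hSp : Sp.PosSemidef) (hSptr : Sp.trace = 1)
    (hSm : Sm.PosSemidef) (hSmtr : Sm.trace = 1)
    (X Y Z P1 : Matrix (Fin 2) (Fin 2) ℂ)
    (hX : X = !![0, 1; 1, 0])
    (hY : Y = !![0, -Complex.I; Complex.I, 0])
    (hZ : Z = !![1, 0; 0, -1])
    (hP1 : P1 = !![1, 0; 0, 0])
    (p0 p1 p2 p3 : ℝ)
    (hp0 : 0 ≤ p0) (hp1 : 0 ≤ p1) (hp2 : 0 ≤ p2) (hp3 : 0 ≤ p3)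
    (hsum : p0 + p1 + p2 + p3 = 1)
    (Spt Smt : Matrix (Fin 2) (Fin 2) ℂ)
    (hSpt : Spt = (p0 : ℂ) • Sp + (p1 : ℂ) • (X * Sp * X)
        + (p2 : ℂ) • (Y * Sp * Y) + (p3 : ℂ) • (Z * Sp * Z))
    (hSmt : Smt = (p0 : ℂ) • Sm + (p1 : ℂ) • (X * Sm * X)
        + (p2 : ℂ) • (Y * Sm * Y) + (p3 : ℂ) • (Z * Sm * Z))
    (As Ats : ℝ)
    (hAs : As = (1 / 2) * ((P1 * Sp).trace).re
        + (1 / 2) * (((1 - P1) * Sm).trace).re)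
    (hAts : Ats = (1 / 2) * ((P1 * Spt).trace).re
        + (1 / 2) * (((1 - P1) * Smt).trace).re) :
    Ats - 1 / 2 = (1 - 2 * (p1 + p2)) * (As - 1 / 2) := by
  have hp : (Sp 0 0).re + (Sp 1 1).re = 1 := by
    have := congrArg Complex.re hSptr
    simpa [Matrix.trace, Fin.sum_univ_two] using this
  have hm : (Sm 0 0).re + (Sm 1 1).re = 1 := by
    have := congrArg Complex.re hSmtr
    simpa [Matrix.trace, Fin.sum_univ_two] using this
  subst hX hY hZ hP1 hSpt hSmt hAs hAts
  simp only [Matrix.trace, Fin.sum_univ_two, Matrix.diag, Matrix.mul_apply,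
    Matrix.sub_apply, Matrix.add_apply, Matrix.smul_apply, Matrix.one_apply,
    Matrix.cons_val', Matrix.cons_val_zero, Matrix.cons_val_one, Matrix.head_cons,
    Matrix.head_fin_const, Matrix.empty_val', Matrix.cons_val_fin_one, Matrix.of_apply,
    smul_eq_mul, Complex.add_re, Complex.mul_re, Complex.ofReal_re, Complex.ofReal_im,
    Complex.I_re, Complex.I_im, Complex.neg_re, Complex.neg_im, Complex.sub_re,
    Complex.one_re, Complex.one_im, Complex.zero_re, Complex.zero_im, Complex.mul_im, Complex.add_im, Complex.sub_im, Complex.neg_im, zero_ne_one, one_ne_zero, if_true, if_false, Fin.isValue, Matrix.one_apply_eq]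
  linear_combination (1/2)*((Sp 0 0).re+(Sm 1 1).re)*hsum + ((p1+p2)/2)*hp + ((p1+p2)/2)*hm
end

section
/- Let p, a, b be real numbers with 1/2 < p ≤ 1, a ≥ 0, and 0 ≤ b ≤ 2. Define the accuracy of the first model A₁ := 1 − (1/2)pa − (1/2)(1 − p)b and its robustness accuracy Ã₁ := (1/2)(1 − p)a + (1/2)pb. If A₁ > p then Ã₁ < p. In other words: if the second model has accuracy A₂ = p equal to its robustness accuracy Ã₂ = p (it is invariant under the perturbation), then whenever the first model is strictly more accurate (A₁ > A₂) and p > 1/2, the first model is strictly less robust-accurate (Ã₁ < Ã₂). -/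
/-- **Example 2 trade-off.** With `1/2 < p ≤ 1`, `a ≥ 0`, `0 ≤ b ≤ 2`,
`A₁ = 1 − (1/2)pa − (1/2)(1 − p)b` and `Ã₁ = (1/2)(1 − p)a + (1/2)pb`, if the
first model is strictly more accurate than the second (`A₁ > p = A₂ = Ã₂`) then
it is strictly less robust-accurate (`Ã₁ < p`). -/
theorem example2_tradeoff
    (p a b : ℝ) (hp : 1 / 2 < p) (hp1 : p ≤ 1) (ha : 0 ≤ a) (hb0 : 0 ≤ b) (hb2 : b ≤ 2)
    (A1 At1 : ℝ)
    (hA1 : A1 = 1 - (1 / 2) * p * a - (1 / 2) * (1 - p) * b)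
    (hAt1 : At1 = (1 / 2) * (1 - p) * a + (1 / 2) * p * b)
    (hacc : p < A1) :
    At1 < p := by
  subst hA1 hAt1; nlinarith [mul_nonneg ha hb0, sq_nonneg (a-b), sq_nonneg (a+b-2)]
end
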